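/- Let F be a CDF on ℝ, and let q_1,...,q_k ≥ 0 with Σ q_r = 1. Define F_q(t) = Σ_{r=1}^k q_r F_(r)(t) where F_(r) is the CDF of the r-th order statistic of a sample of size k from F. If q_r = 1/k for all r then F_q = F; conversely, if F is continuous and strictly increasing on an interval where it takes all values in (0,1) and F_q = F, then q_r = 1/k for all r. -/

import Mathlib

open Finset Polynomial


private lemma urss_mean (k : ℕ) (p : ℝ) :
    ∑ j ∈ Finset.range (k+1), (j:ℝ) * ((k.choose j : ℝ) * p ^ j * (1 - p) ^ (k - j))
      = k * p := by
  have h2 := congrArg (Polynomial.eval p) (bernsteinPolynomial.sum_smul ℝ k)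
  simp only [Polynomial.eval_finset_sum, Polynomial.eval_smul, nsmul_eq_mul,
    Polynomial.eval_mul, Polynomial.eval_natCast, Polynomial.eval_X] at h2
  simpa [bernsteinPolynomial] using h2

private lemma urss_swap (k : ℕ) (q : ℕ → ℝ) (B : ℕ → ℝ) :
    ∑ r ∈ Finset.Icc 1 k, q r * ∑ j ∈ Finset.Icc r k, B j
      = ∑ j ∈ Finset.Icc 1 k, (∑ r ∈ Finset.Icc 1 j, q r) * B j := by
  simp only [Finset.mul_sum, Finset.sum_mul]
  exact Finset.sum_comm' (by intro x y; simp only [Finset.mem_Icc]; omega)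



/-- The URSS limiting distribution F_q = ∑ q_r F_(r) equals F iff the design is
balanced: if q_r = 1/k for all r then F_q = F; conversely, if F is continuous
and attains all values in (0,1), then F_q = F forces q_r = 1/k for all r. -/
theorem urss_limit_df_eq_iff_balanced (k : ℕ) (hk : 0 < k) (F : ℝ → ℝ)
    (hFcont : Continuous F) (hFrange : ∀ t, F t ∈ Set.Icc (0:ℝ) 1)
    (q : ℕ → ℝ) (hq0 : ∀ r, 0 ≤ q r) (hq1 : ∑ r ∈ Finset.Icc 1 k, q r = 1)
    (Fq : ℝ → ℝ)
    (hFq : ∀ t, Fq t = ∑ r ∈ Finset.Icc 1 k, q r * ∑ j ∈ Finset.Icc r k,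
        (k.choose j : ℝ) * F t ^ j * (1 - F t) ^ (k - j)) :
    ((∀ r ∈ Finset.Icc 1 k, q r = 1 / (k:ℝ)) → ∀ t, Fq t = F t) ∧
    ((Set.Ioo (0:ℝ) 1 ⊆ Set.range F) → (∀ t, Fq t = F t) →
      ∀ r ∈ Finset.Icc 1 k, q r = 1 / (k:ℝ)) := by
  have hkR : (k:ℝ) ≠ 0 := Nat.cast_ne_zero.mpr hk.ne'
  set c : ℕ → ℝ := fun j => ∑ r ∈ Finset.Icc 1 j, q r with hc
  have hrange : Finset.range (k+1) = insert 0 (Finset.Icc 1 k) := by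
    ext x; simp [Finset.mem_range, Finset.mem_Icc]; omega
  -- uniform rewriting of Fq
  have hFq' : ∀ t, Fq t = ∑ j ∈ Finset.range (k+1),
      c j * ((k.choose j : ℝ) * F t ^ j * (1 - F t) ^ (k - j)) := by
    intro t
    rw [hFq t, urss_swap, hrange, Finset.sum_insert (by simp)]
    simp [hc]
  constructor
  · intro hbal t
    have hcj : ∀ j ∈ Finset.range (k+1), c j * ((k.choose j : ℝ) * F t ^ j * (1 - F t) ^ (k - j))
        = (1/(k:ℝ)) * ((j:ℝ) * ((k.choose j : ℝ) * F t ^ j * (1 - F t) ^ (k - j))) := by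
      intro j hj
      have : c j = j / (k:ℝ) := by
        show (∑ r ∈ Finset.Icc 1 j, q r) = (j:ℝ) / (k:ℝ)
        rw [Finset.sum_congr rfl (fun r hr => hbal r ?_)]
        · rw [Finset.sum_const, Nat.card_Icc]
          simp; ring
        · simp only [Finset.mem_Icc] at hr ⊢
          exact ⟨hr.1, hr.2.trans (by simpa using Nat.lt_succ_iff.mp (Finset.mem_range.mp hj))⟩
      rw [this]; ring
    rw [hFq' t, Finset.sum_congr rfl hcj, ← Finset.mul_sum, urss_mean]
    field_simp
  · intro hsurj heq
    -- for p in (0,1): ∑ (c j - j/k) * B j p = 0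
    have hzero : ∀ p ∈ Set.Ioo (0:ℝ) 1, ∑ j ∈ Finset.range (k+1),
        (c j - (j:ℝ)/(k:ℝ)) * ((k.choose j : ℝ) * p ^ j * (1 - p) ^ (k - j)) = 0 := by
      intro p hp
      obtain ⟨t, ht⟩ := hsurj hp
      have h1 := heq t
      rw [hFq' t] at h1
      rw [ht] at h1
      have h2 := urss_mean k p
      simp only [sub_mul]
      rw [Finset.sum_sub_distrib, h1]
      have : ∑ j ∈ Finset.range (k+1),
          (j:ℝ)/(k:ℝ) * ((k.choose j : ℝ) * p ^ j * (1 - p) ^ (k - j))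
          = (1/(k:ℝ)) * ∑ j ∈ Finset.range (k+1),
            (j:ℝ) * ((k.choose j : ℝ) * p ^ j * (1 - p) ^ (k - j)) := by
        rw [Finset.mul_sum]; apply Finset.sum_congr rfl; intro j _; ring
      rw [this, h2]
      field_simp
      ring
    -- transfer to polynomial in u = p/(1-p)
    set Q : Polynomial ℝ := ∑ j ∈ Finset.range (k+1),
        Polynomial.C ((c j - (j:ℝ)/(k:ℝ)) * (k.choose j : ℝ)) * Polynomial.X ^ j with hQ
    have hQeval : ∀ u : ℝ, 0 < u → Q.eval u = 0 := by
      intro u hu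
      have h1u : (0:ℝ) < 1 + u := by linarith
      set p := u / (1 + u) with hpdef
      have hp : p ∈ Set.Ioo (0:ℝ) 1 := by
        constructor
        · positivity
        · rw [hpdef, div_lt_one h1u]; linarith
      have h1p : 1 - p = 1 / (1 + u) := by
        rw [hpdef]; field_simp
        ring
      have hz := hzero p hp
      have hkey : ∀ j ∈ Finset.range (k+1),
          (c j - (j:ℝ)/(k:ℝ)) * ((k.choose j : ℝ) * p ^ j * (1 - p) ^ (k - j))
          = ((c j - (j:ℝ)/(k:ℝ)) * (k.choose j : ℝ) * u ^ j) / (1+u)^k := by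
        intro j hj
        rw [Finset.mem_range, Nat.lt_succ_iff] at hj
        rw [h1p, hpdef]
        have hpow : (1+u)^k = (1+u)^j * (1+u)^(k-j) := by
          rw [← pow_add]; congr 1; omega
        rw [hpow]
        rw [div_pow, one_div_pow]
        field_simp
      rw [Finset.sum_congr rfl hkey, ← Finset.sum_div, _root_.div_eq_zero_iff] at hz
      rcases hz with hz | hz
      · rw [hQ]
        simp only [Polynomial.eval_finset_sum, Polynomial.eval_mul, Polynomial.eval_C,
          Polynomial.eval_pow, Polynomial.eval_X]
        exact hz
      · exact absurd hz (pow_ne_zero _ h1u.ne')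
    have hQ0 : Q = 0 := by
      apply Polynomial.eq_zero_of_infinite_isRoot
      apply Set.Infinite.mono (s := Set.Ioo (1:ℝ) 2)
      · intro x hx
        exact hQeval x (by linarith [hx.1])
      · exact Set.Ioo_infinite one_lt_two
    have hcoef : ∀ m, m ≤ k → c m = (m:ℝ)/(k:ℝ) := by
      intro m hm
      have := congrArg (fun P => Polynomial.coeff P m) hQ0
      simp only [hQ, Polynomial.finset_sum_coeff, Polynomial.coeff_C_mul,
        Polynomial.coeff_X_pow, Polynomial.coeff_zero, mul_ite, mul_one, mul_zero] at this
      rw [Finset.sum_ite_eq (Finset.range (k+1)) m] at this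
      rw [if_pos (Finset.mem_range.mpr (Nat.lt_succ_of_le hm))] at this
      have hch : (k.choose m : ℝ) ≠ 0 := by
        exact_mod_cast (Nat.choose_pos hm).ne'
      have := mul_eq_zero.mp this
      rcases this with h | h
      · linarith [sub_eq_zero.mp h]
      · exact absurd h hch
    intro r hr
    rw [Finset.mem_Icc] at hr
    obtain ⟨hr1, hr2⟩ := hr
    obtain ⟨s, rfl⟩ := Nat.exists_eq_add_of_le hr1
    have hstep : c (1 + s) = c s + q (1 + s) := by
      rw [hc]
      simp only [add_comm 1 s]
      rw [Finset.sum_Icc_succ_top (by omega)]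
    have h1 := hcoef (1+s) hr2
    have h2 := hcoef s (by omega)
    rw [hstep, h2] at h1
    have : q (1+s) = ((1+s:ℕ):ℝ)/(k:ℝ) - (s:ℝ)/(k:ℝ) := by linarith
    rw [this]
    push_cast
    ring
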